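/- Let T be a triangulated category with a class E of objects, and suppose F ∈ T is a direct summand of an object of [E]-bar_4 (four-fold extensions of products of E-objects, closed under summands). Suppose there is a triangle D → F → F' → D[1] where the map g : D → F is a composite of 4 cophantom morphisms with respect to E. Then g = 0 and F is a direct summand of F'. -/

import Mathlib

/-!
STATEMENT 16: Let `T` be a triangulated category with a class `E` of objects,
and suppose `F ∈ T` is a direct summand of an object of `[E]-bar_4` (the
four-fold extensions of products of `E`-objects, closed under summands).
Suppose there is a triangle `D → F → F' → D[1]` where the map `g : D → F` is
a composite of `4` cophantom morphisms with respect to `E`.  Then `g = 0` and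
`F` is a direct summand of `F'`.
-/

open CategoryTheory CategoryTheory.Limits CategoryTheory.Pretriangulated
  CategoryTheory.Triangulated

section

variable {C : Type u} [Category.{v} C] [Preadditive C] [HasZeroObject C]
  [HasShift C ℤ] [∀ (n : ℤ), (shiftFunctor C n).Additive] [Pretriangulated C]

/-- A morphism is cophantom w.r.t. a class `E` if every composite into an
object of `E` vanishes. -/
def Cophantom (E : C → Prop) {X Y : C} (f : X ⟶ Y) : Prop :=
  ∀ (Z : C), E Z → ∀ g : Y ⟶ Z, f ≫ g = 0

/-- `IsNCophantom E n f` says `f` is a composite of `n` cophantom morphisms. -/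
inductive IsNCophantom (E : C → Prop) : ℕ → ∀ {X Y : C}, (X ⟶ Y) → Prop where
  | one {X Y : C} (f : X ⟶ Y) (hf : Cophantom E f) : IsNCophantom E 1 f
  | comp {n : ℕ} {X Y Z : C} (f : X ⟶ Y) (g : Y ⟶ Z) (hf : Cophantom E f)
      (hg : IsNCophantom E n g) : IsNCophantom E (n + 1) (f ≫ g)

/-- `BarClosure E n X` : `X` belongs to `[E]-bar_n`, i.e. `X` is a direct
summand of an `n`-fold extension of products of objects of `E`. -/
inductive BarClosure (E : C → Prop) : ℕ → C → Prop where
  | prodSummand {ι : Type v} (Y : ι → C) [HasProduct Y] (hY : ∀ i, E (Y i))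
      (X : C) (s : X ⟶ ∏ᶜ Y) (r : ∏ᶜ Y ⟶ X) (hr : s ≫ r = 𝟙 X) :
      BarClosure E 1 X
  | extSummand {n : ℕ} {C₁ Z C₂ X : C} (f : C₁ ⟶ Z) (g : Z ⟶ C₂)
      (h : C₂ ⟶ C₁⟦(1 : ℤ)⟧) (hdist : Triangle.mk f g h ∈ distTriang C)
      (h₁ : BarClosure E 1 C₁) (h₂ : BarClosure E n C₂)
      (s : X ⟶ Z) (r : Z ⟶ X) (hr : s ≫ r = 𝟙 X) :
      BarClosure E (n + 1) X

lemma cophantom_comp_bar1 (E : C → Prop) {X Y W : C} (g : X ⟶ Y)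
    (hg : Cophantom E g) (hW : BarClosure E 1 W) (h : Y ⟶ W) : g ≫ h = 0 := by
  cases hW with
  | prodSummand Yf hY W' s r hr =>
    have h0 : g ≫ (h ≫ s) = 0 := by
      apply limit.hom_ext
      intro j
      simp only [zero_comp, Category.assoc]
      exact hg _ (hY _) _
    have : g ≫ h = g ≫ h ≫ s ≫ r := by rw [hr, Category.comp_id]
    rw [this, show g ≫ h ≫ s ≫ r = (g ≫ h ≫ s) ≫ r by simp, h0, zero_comp]
  | extSummand f' g' h' hdist h1 h2 s r hr => cases h2

lemma isNCophantom_comp_bar (E : C → Prop) {n : ℕ} {X Y : C} {g : X ⟶ Y}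
    (hg : IsNCophantom E n g) :
    ∀ {W : C}, BarClosure E n W → ∀ h : Y ⟶ W, g ≫ h = 0 := by
  induction hg with
  | one f hf =>
    intro W hW h
    exact cophantom_comp_bar1 E f hf hW h
  | comp f g' hf hg' ih =>
    intro W hW h
    cases hW with
    | prodSummand Yf hY W' s r hr => cases hg'
    | extSummand w x y hdist h1 h2 s' r' hr' =>
      have h1' : (g' ≫ h ≫ s') ≫ x = 0 := by
        rw [Category.assoc, Category.assoc]
        exact ih h2 (h ≫ s' ≫ x)
      obtain ⟨k, hk⟩ := Triangle.coyoneda_exact₂ _ hdist (g' ≫ h ≫ s') h1'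
      have hfk : f ≫ k = 0 := cophantom_comp_bar1 E f hf h1 k
      have h2' : f ≫ g' ≫ h ≫ s' = 0 := by
        exact (congrArg (f ≫ ·) hk).trans (by rw [← Category.assoc, hfk, zero_comp]; rfl)
      have : (f ≫ g') ≫ h = (f ≫ g') ≫ h ≫ s' ≫ r' := by
        rw [hr', Category.comp_id]
      rw [this]
      simp only [Category.assoc]
      rw [reassoc_of% h2', zero_comp]

theorem stmt16 (E : C → Prop)
    -- `F` is a direct summand of an object of `[E]-bar_4`
    (F : C) (Z : C) (hZ : BarClosure E 4 Z)
    (s : F ⟶ Z) (r : Z ⟶ F) (hsr : s ≫ r = 𝟙 F)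
    -- a triangle `D → F → F' → D[1]` with `g ∈ J^4`
    (D F' : C) (g : D ⟶ F) (u : F ⟶ F') (v : F' ⟶ D⟦(1 : ℤ)⟧)
    (hdist : Triangle.mk g u v ∈ distTriang C)
    (hg : IsNCophantom E 4 g) :
    g = 0 ∧ ∃ p : F' ⟶ F, u ≫ p = 𝟙 F := by
  have hgs : g ≫ s = 0 := isNCophantom_comp_bar E hg hZ s
  have hg0 : g = 0 := by
    rw [← Category.comp_id g, ← hsr, ← Category.assoc, hgs, zero_comp]
  refine ⟨hg0, ?_⟩
  obtain ⟨p, hp⟩ := Triangle.yoneda_exact₂ _ hdist (𝟙 (Triangle.mk g u v).obj₂)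
    (by simp [hg0]; exact zero_comp)
  exact ⟨p, hp.symm⟩

end
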